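/- For a dendroidally ordered set A and a ∈ A, the subset A_a = {a' ∈ A : a' ≤_d a} with the induced broad relation is dendroidally ordered, with root a. -/

import Mathlib

/-- A (commutative) broad poset: a set `A` with a relation between the free
commutative monoid on `A` (modelled as `Multiset A`) and `A`, satisfying
broad reflexivity, transitivity and antisymmetry. -/
structure BroadPoset (A : Type) where
  le : Multiset A → A → Prop
  le_refl : ∀ a : A, le {a} a
  le_trans : ∀ (a : A) (l : List (Multiset A × A)),
      le (↑(l.map Prod.snd) : Multiset A) a → (∀ p ∈ l, le p.1 p.2) →
      le (l.map Prod.fst).sum a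
  le_antisymm : ∀ a a' : A, le {a} a' → le {a'} a → a = a'

/-- The descendance relation: `b ≤_d a` iff `b` occurs in some `b' ≤ a`. -/
def BroadPoset.descLe {A : Type} (P : BroadPoset A) (b a : A) : Prop :=
  ∃ b' : Multiset A, P.le b' a ∧ b ∈ b'

/-- Strict broad inequality `b < a`. -/
def BroadPoset.blt {A : Type} (P : BroadPoset A) (b : Multiset A) (a : A) : Prop :=
  P.le b a ∧ b ≠ {a}

/-- The induced order on `A⁺`: `s ≤ t` iff `t = t₁·…·tₙ` and `s = s₁·…·sₙ`
with `sᵢ ≤ tᵢ` for each `i`. -/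
def BroadPoset.multLe {A : Type} (P : BroadPoset A) (s t : Multiset A) : Prop :=
  ∃ l : List (Multiset A × A), (↑(l.map Prod.snd) : Multiset A) = t ∧
    (l.map Prod.fst).sum = s ∧ ∀ p ∈ l, P.le p.1 p.2

/-- A leaf: an element with `ĥa = ∅`. -/
def BroadPoset.IsLeaf {A : Type} (P : BroadPoset A) (a : A) : Prop :=
  ∀ b : Multiset A, ¬ P.blt b a

/-- `u` is the maximum of `ĥa = {b | b < a}`, i.e. `u = a↑`; its members are
the children of `a`. -/
def BroadPoset.IsChildSet {A : Type} (P : BroadPoset A) (a : A) (u : Multiset A) : Prop :=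
  P.blt u a ∧ ∀ b : Multiset A, P.blt b a → P.multLe b u

/-- `r` is the root: every element is a descendant of `r` (extremum of `≤_d`). -/
def BroadPoset.IsRoot {A : Type} (P : BroadPoset A) (r : A) : Prop :=
  ∀ a : A, P.descLe a r

/-- Monotone functions between broad posets. -/
def IsMonotone {A B : Type} (P : BroadPoset A) (Q : BroadPoset B) (f : A → B) : Prop :=
  ∀ (b : Multiset A) (a : A), P.le b a → Q.le (b.map f) (f a)

/-- A link: `b < a` such that `b ≤ b' < a` implies `b = b'`. -/
def BroadPoset.IsLink {A : Type} (P : BroadPoset A) (b : Multiset A) (a : A) : Prop :=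
  P.blt b a ∧ ∀ b' : Multiset A, P.multLe b b' → P.blt b' a → b = b'

/-- A dendroidally ordered set: a finite broad poset which is simple, has a
root, and in which every non-leaf has children. -/
structure BroadPoset.IsDendroidal {A : Type} (P : BroadPoset A) : Prop where
  finite : Set.Finite {p : Multiset A × A | P.le p.1 p.2}
  simple : ∀ (b : Multiset A) (a : A), P.le b a → b.Nodup
  root : ∃ r : A, P.IsRoot r
  children : ∀ a : A, ¬ P.IsLeaf a → ∃ u : Multiset A, P.IsChildSet a u

namespace SubtreeAux

variable {A : Type} (P : BroadPoset A)

/-- descendance is transitive. -/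
theorem descLe_trans {b x a : A} (h1 : P.descLe b x) (h2 : P.descLe x a) :
    P.descLe b a := by
  obtain ⟨b', hb', hbm⟩ := h1
  obtain ⟨c', hc', hxm⟩ := h2
  obtain ⟨c'', rfl⟩ := Multiset.exists_cons_of_mem hxm
  let l : List (Multiset A × A) := (b', x) :: c''.toList.map (fun y => ({y}, y))
  have hsnd : (↑(l.map Prod.snd) : Multiset A) = x ::ₘ c'' := by
    simp only [l, List.map_cons, List.map_map, Function.comp_def, List.map_id',
      ← Multiset.cons_coe, Multiset.coe_toList]
  have hle : P.le (l.map Prod.fst).sum a := by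
    refine P.le_trans a l (by rw [hsnd]; exact hc') ?_
    intro p hp
    rcases List.mem_cons.1 hp with h | h
    · subst h; exact hb'
    · obtain ⟨y, _, rfl⟩ := List.mem_map.1 h
      exact P.le_refl y
  refine ⟨(l.map Prod.fst).sum, hle, ?_⟩
  simp only [l, List.map_cons, List.sum_cons]
  exact Multiset.mem_add.2 (Or.inl hbm)

theorem map_sum_list {α β : Type} (f : α → β) (L : List (Multiset α)) :
    (L.sum).map f = (L.map (Multiset.map f)).sum := by
  induction L with
  | nil => simp
  | cons h t ih => simp [ih]

theorem mem_descLe {c : Multiset A} {y z : A} (hle : P.le c y) (hz : z ∈ c) :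
    P.descLe z y := ⟨c, hle, hz⟩

/-- lift a multiset whose elements all descend from `a`. -/
def lift (a : A) (m : Multiset A) (h : ∀ z ∈ m, P.descLe z a) :
    Multiset {x : A // P.descLe x a} :=
  m.attach.map fun z => ⟨z.1, h z.1 z.2⟩

@[simp] theorem lift_map_val (a : A) (m : Multiset A) (h : ∀ z ∈ m, P.descLe z a) :
    (lift P a m h).map Subtype.val = m := by
  simp [lift]

theorem val_injective {a : A} :
    Function.Injective (Multiset.map (Subtype.val : {x : A // P.descLe x a} → A)) :=
  Multiset.map_injective Subtype.val_injective

/-- The induced broad poset on the subtree. -/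
def SubP (a : A) : BroadPoset {x : A // P.descLe x a} where
  le s x := P.le (s.map Subtype.val) x.val
  le_refl x := by simpa using P.le_refl x.val
  le_trans x l h1 h2 := by
    let l' : List (Multiset A × A) := l.map (fun p => (p.1.map Subtype.val, p.2.val))
    have hsnd : (↑(l'.map Prod.snd) : Multiset A)
        = (↑(l.map Prod.snd) : Multiset {x : A // P.descLe x a}).map Subtype.val := by
      simp [l', List.map_map, Function.comp_def]
    have h1' : P.le (↑(l'.map Prod.snd) : Multiset A) x.val := by rw [hsnd]; exact h1
    have h2' : ∀ p ∈ l', P.le p.1 p.2 := by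
      intro p hp
      obtain ⟨q, hq, rfl⟩ := List.mem_map.1 hp
      exact h2 q hq
    have key := P.le_trans x.val l' h1' h2'
    have hfst : (l'.map Prod.fst).sum = ((l.map Prod.fst).sum).map Subtype.val := by
      rw [map_sum_list]
      simp [l', List.map_map, Function.comp_def]
    show P.le (((l.map Prod.fst).sum).map Subtype.val) x.val
    rwa [hfst] at key
  le_antisymm x y h1 h2 := Subtype.ext (P.le_antisymm x.val y.val (by simpa using h1)
    (by simpa using h2))

/-- lifting multLe. -/
theorem multLe_lift (a : A) (s t : Multiset {x : A // P.descLe x a})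
    (h : P.multLe (s.map Subtype.val) (t.map Subtype.val)) :
    (SubP P a).multLe s t := by
  obtain ⟨l, h1, h2, h3⟩ := h
  have hmem : ∀ p ∈ l, (∀ z ∈ p.1, P.descLe z a) ∧ P.descLe p.2 a := by
    intro p hp
    have hp2l : p.2 ∈ l.map Prod.snd := List.mem_map.2 ⟨p, hp, rfl⟩
    have hp2 : p.2 ∈ (↑(l.map Prod.snd) : Multiset A) := Multiset.mem_coe.2 hp2l
    rw [h1] at hp2
    obtain ⟨y, _, hy⟩ := Multiset.mem_map.1 hp2
    have hp2a : P.descLe p.2 a := hy ▸ y.2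
    exact ⟨fun z hz => descLe_trans P (mem_descLe P (h3 p hp) hz) hp2a, hp2a⟩
  let l' : List (Multiset {x : A // P.descLe x a} × {x : A // P.descLe x a}) :=
    l.attach.map (fun q => (lift P a q.1.1 ((hmem q.1 q.2).1), ⟨q.1.2, (hmem q.1 q.2).2⟩))
  refine ⟨l', ?_, ?_, ?_⟩
  · apply val_injective P
    have hl : (l'.map Prod.snd).map Subtype.val = l.map Prod.snd := by
      simp only [l', List.map_map, Function.comp_def]
      exact List.attach_map_val (l := l) (f := Prod.snd)
    rw [Multiset.map_coe, hl, h1]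
  · apply val_injective P
    rw [map_sum_list]
    have hl : (l'.map Prod.fst).map (Multiset.map Subtype.val) = l.map Prod.fst := by
      simp only [l', List.map_map, Function.comp_def, lift_map_val]
      exact List.attach_map_val (l := l) (f := Prod.fst)
    rw [hl, h2]
  · intro p hp
    obtain ⟨q, _, rfl⟩ := List.mem_map.1 hp
    show P.le _ _
    rw [lift_map_val]
    exact h3 q.1 q.2

end SubtreeAux

open SubtreeAux

/-- For a dendroidally ordered set `A` and `a ∈ A`, the subset
`A_a = {a' | a' ≤_d a}` with the induced broad relation is dendroidally
ordered, with root `a`. -/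
theorem subtree_dendroidal {A : Type} (P : BroadPoset A) (hP : P.IsDendroidal) (a : A) :
    ∃ Q : BroadPoset {x : A // P.descLe x a},
      Q.le = (fun (s : Multiset {x : A // P.descLe x a}) (x : {x : A // P.descLe x a}) =>
        P.le (s.map Subtype.val) x.val) ∧
      Q.IsDendroidal ∧
      Q.IsRoot ⟨a, ⟨{a}, P.le_refl a, Multiset.mem_singleton_self a⟩⟩ := by
  have hroot : (SubP P a).IsRoot ⟨a, ⟨{a}, P.le_refl a, Multiset.mem_singleton_self a⟩⟩ := by
    intro y
    obtain ⟨b', hle, hm⟩ := y.2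
    refine ⟨lift P a b' (fun z hz => mem_descLe P hle hz), ?_, ?_⟩
    · show P.le _ _
      rw [lift_map_val]
      exact hle
    · exact Multiset.mem_map.2 ⟨⟨y.val, hm⟩, Multiset.mem_attach _ _, Subtype.ext rfl⟩
  refine ⟨SubP P a, rfl, ⟨?_, ?_, ?_, ?_⟩, hroot⟩
  · -- finite
    have hfinj : Function.Injective
        (fun p : Multiset {x : A // P.descLe x a} × {x : A // P.descLe x a} =>
          (p.1.map Subtype.val, p.2.val)) := by
      intro p q h
      have h1 := congrArg Prod.fst h
      have h2 := congrArg Prod.snd h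
      exact Prod.ext (val_injective P h1) (Subtype.ext h2)
    exact hP.finite.preimage hfinj.injOn
  · -- simple
    intro b x h
    exact Multiset.Nodup.of_map Subtype.val (hP.simple _ _ h)
  · exact ⟨_, hroot⟩
  · -- children
    intro x hx
    rw [BroadPoset.IsLeaf] at hx
    push_neg at hx
    obtain ⟨b, hb⟩ := hx
    have hxleaf : ¬ P.IsLeaf x.val := fun h => h (b.map Subtype.val)
      ⟨hb.1, fun hc => hb.2 (val_injective P (by rw [hc]; simp))⟩
    obtain ⟨u, hu⟩ := hP.children x.val hxleaf
    have hu_mem : ∀ z ∈ u, P.descLe z a := fun z hz =>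
      descLe_trans P (mem_descLe P hu.1.1 hz) x.2
    refine ⟨lift P a u hu_mem, ⟨?_, ?_⟩, ?_⟩
    · show P.le _ _
      rw [lift_map_val]
      exact hu.1.1
    · intro h
      apply hu.1.2
      rw [← lift_map_val P a u hu_mem, h]
      simp
    · intro b' hb'
      apply multLe_lift
      rw [lift_map_val]
      exact hu.2 _ ⟨hb'.1, fun hc => hb'.2 (val_injective P (by rw [hc]; simp))⟩
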